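/- Let H be a real Hilbert space, V ⊆ H a closed subspace, and a : H → H' an operator that is strongly monotone along V, i.e. there is γ > 0 with (a(x) − a(y))[x − y] ≥ γ ‖x − y‖² whenever x − y ∈ V, and Lipschitz-type continuous: ‖a(x) − a(y)‖_{H'} ≤ L(1 + ‖x‖^{ρ-2} + ‖y‖^{ρ-2}) ‖x − y‖ for some L > 0 and ρ ∈ [3,4]. Suppose u, u_h, w ∈ H satisfy u − u_h − w ∈ V and (a(u) − a(u_h))[z] = R(z) for z := u − u_h − w, where R ∈ H'. Then γ ‖z‖ ≤ L (1 + ‖u − w‖^{ρ-2} + ‖u‖^{ρ-2}) ‖w‖ + ‖R‖_{H'}. -/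
import Mathlib


theorem stmt5 {H : Type*} [NormedAddCommGroup H] [InnerProductSpace ℝ H] [CompleteSpace H]
    (V : Submodule ℝ H) (hV : IsClosed (V : Set H))
    (a : H → (H →L[ℝ] ℝ)) (γ L ρ : ℝ) (hγ : 0 < γ) (hL : 0 < L)
    (hρ : ρ ∈ Set.Icc (3:ℝ) 4)
    (hmono : ∀ x y : H, x - y ∈ V → γ * ‖x - y‖ ^ 2 ≤ a x (x - y) - a y (x - y))
    (hlip : ∀ x y : H, ‖a x - a y‖ ≤ L * (1 + ‖x‖ ^ (ρ - 2) + ‖y‖ ^ (ρ - 2)) * ‖x - y‖)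
    (u u_h w : H) (R : H →L[ℝ] ℝ)
    (hz : u - u_h - w ∈ V)
    (hR : a u (u - u_h - w) - a u_h (u - u_h - w) = R (u - u_h - w)) :
    γ * ‖u - u_h - w‖ ≤
      L * (1 + ‖u - w‖ ^ (ρ - 2) + ‖u‖ ^ (ρ - 2)) * ‖w‖ + ‖R‖ := by
  set z := u - u_h - w with hzdef
  have hzz : (u - w) - u_h = z := by rw [hzdef]; abel
  have hC0 : (0:ℝ) ≤ 1 + ‖u - w‖ ^ (ρ - 2) + ‖u‖ ^ (ρ - 2) := by
    positivity
  have hRHS0 : (0:ℝ) ≤ L * (1 + ‖u - w‖ ^ (ρ - 2) + ‖u‖ ^ (ρ - 2)) * ‖w‖ + ‖R‖ := by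
    positivity
  rcases eq_or_lt_of_le (norm_nonneg z) with hz0 | hz0
  · rw [← hz0, mul_zero]; exact hRHS0
  have hmono' := hmono (u - w) u_h (by rw [hzz]; exact hz)
  rw [hzz] at hmono'
  have key : γ * ‖z‖ ^ 2 ≤ (a (u - w) - a u) z + R z := by
    calc γ * ‖z‖ ^ 2 ≤ a (u - w) z - a u_h z := hmono'
    _ = (a (u - w) z - a u z) + (a u z - a u_h z) := by ring
    _ = (a (u - w) - a u) z + R z := by
        rw [hR]; simp
  have h1 : (a (u - w) - a u) z ≤
      L * (1 + ‖u - w‖ ^ (ρ - 2) + ‖u‖ ^ (ρ - 2)) * ‖w‖ * ‖z‖ := by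
    calc (a (u - w) - a u) z ≤ ‖(a (u - w) - a u) z‖ := le_abs_self _
    _ ≤ ‖a (u - w) - a u‖ * ‖z‖ := (a (u - w) - a u).le_opNorm z
    _ ≤ (L * (1 + ‖u - w‖ ^ (ρ - 2) + ‖u‖ ^ (ρ - 2)) * ‖u - w - u‖) * ‖z‖ := by
        gcongr; exact hlip (u - w) u
    _ = L * (1 + ‖u - w‖ ^ (ρ - 2) + ‖u‖ ^ (ρ - 2)) * ‖w‖ * ‖z‖ := by
        rw [show u - w - u = -w by abel, norm_neg]
  have h2 : R z ≤ ‖R‖ * ‖z‖ := (le_abs_self _).trans (R.le_opNorm z)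
  have : γ * ‖z‖ * ‖z‖ ≤
      (L * (1 + ‖u - w‖ ^ (ρ - 2) + ‖u‖ ^ (ρ - 2)) * ‖w‖ + ‖R‖) * ‖z‖ := by
    calc γ * ‖z‖ * ‖z‖ = γ * ‖z‖ ^ 2 := by ring
    _ ≤ (a (u - w) - a u) z + R z := key
    _ ≤ L * (1 + ‖u - w‖ ^ (ρ - 2) + ‖u‖ ^ (ρ - 2)) * ‖w‖ * ‖z‖ + ‖R‖ * ‖z‖ :=
        add_le_add h1 h2
    _ = (L * (1 + ‖u - w‖ ^ (ρ - 2) + ‖u‖ ^ (ρ - 2)) * ‖w‖ + ‖R‖) * ‖z‖ := by ring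
  exact le_of_mul_le_mul_right this hz0
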